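/- arXiv:2104.09449 — 2 statements merged into one kernel-verified Lean document; each statement's English description precedes it below -/
import Mathlib

section
/- If a primitive Pythagorean triple (a,b,c) satisfies c - b = d, then either d = s^2 for some odd positive integer s, or d = 2*s^2 for some positive integer s. -/
theorem stmt_12 (a b c d : ℕ) (ha : 0 < a) (hb : 0 < b) (hc : 0 < c)
    (hpyth : a ^ 2 + b ^ 2 = c ^ 2) (hbc : b < c)
    (hgcd : Nat.gcd a (Nat.gcd b c) = 1) (hd : c - b = d) :
    (∃ s : ℕ, 0 < s ∧ Odd s ∧ d = s ^ 2) ∨ (∃ s : ℕ, 0 < s ∧ d = 2 * s ^ 2) := by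
  subst hd
  set d := c - b with hdd
  set e := c + b with hee
  have hd0 : 0 < d := by omega
  -- gcd b c = 1
  have hbc1 : Nat.Coprime b c := by
    have hg : Nat.gcd b c ∣ a := by
      rw [← Nat.pow_dvd_pow_iff (n := 2) (by norm_num)]
      have h1 : Nat.gcd b c ^ 2 ∣ b ^ 2 := pow_dvd_pow_of_dvd (Nat.gcd_dvd_left _ _) 2
      have h2 : Nat.gcd b c ^ 2 ∣ c ^ 2 := pow_dvd_pow_of_dvd (Nat.gcd_dvd_right _ _) 2
      have : a ^ 2 = c ^ 2 - b ^ 2 := by omega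
      rw [this]
      exact Nat.dvd_sub h2 h1
    have : Nat.gcd b c ∣ 1 := hgcd ▸ Nat.dvd_gcd hg dvd_rfl
    exact Nat.eq_one_of_dvd_one this
  have hmul : d * e = a ^ 2 := by
    have h1 : d * e = c ^ 2 - b ^ 2 := by
      rw [hdd, hee]
      rcases Nat.exists_eq_add_of_le hbc.le with ⟨k, rfl⟩
      have : b + k - b = k := by omega
      rw [this]; ring_nf; omega
    omega
  have hgde : Nat.gcd d e ∣ 2 := by
    have h1 : Nat.gcd d e ∣ 2 * b := by
      have : e - d = 2 * b := by omega
      exact this ▸ Nat.dvd_sub (Nat.gcd_dvd_right _ _) (Nat.gcd_dvd_left _ _)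
    have h2 : Nat.gcd d e ∣ 2 * c := by
      have : e + d = 2 * c := by omega
      exact this ▸ Nat.dvd_add (Nat.gcd_dvd_right _ _) (Nat.gcd_dvd_left _ _)
    have := Nat.dvd_gcd h1 h2
    rwa [Nat.gcd_mul_left, hbc1, mul_one] at this
  rcases Nat.even_or_odd d with hde | hdo
  · -- d even: then e even
    right
    have hee2 : Even e := by
      rcases hde with ⟨k, hk⟩
      have : d + e = 2 * c := by omega
      exact ⟨c - k, by omega⟩
    obtain ⟨d', hd'⟩ := hde
    obtain ⟨e', he'⟩ := hee2
    have ha2 : 2 ∣ a := by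
      rw [← Nat.pow_dvd_pow_iff (n := 2) (by norm_num)]
      have : 2 ^ 2 ∣ d * e := ⟨d' * e', by rw [hd', he']; ring⟩
      rwa [hmul] at this
    obtain ⟨a', ha'⟩ := ha2
    have hmul' : d' * e' = a' ^ 2 := by
      have : 4 * (d' * e') = 4 * a' ^ 2 := by
        rw [hd', he'] at hmul; rw [ha'] at hmul; nlinarith [hmul]
      omega
    have hcop : Nat.Coprime d' e' := by
      have : Nat.gcd d e = 2 * Nat.gcd d' e' := by
        rw [hd', he']
        rw [show d' + d' = 2 * d' by ring, show e' + e' = 2 * e' by ring, Nat.gcd_mul_left]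
      have h2 : 2 * Nat.gcd d' e' ∣ 2 := this ▸ hgde
      have := Nat.le_of_dvd (by norm_num) h2
      have hpos : 0 < Nat.gcd d' e' := Nat.gcd_pos_of_pos_left _ (by omega)
      omega
    obtain ⟨s, hs⟩ := exists_eq_pow_of_mul_eq_pow
      (Nat.isUnit_iff.mpr hcop) hmul'
    exact ⟨s, by nlinarith [hs, hd0, hd'], by omega⟩
  · -- d odd: gcd d e = 1
    left
    have hcop : Nat.Coprime d e := by
      rcases (Nat.dvd_prime Nat.prime_two).mp hgde with h | h
      · exact h
      · exfalso
        have : 2 ∣ d := h ▸ Nat.gcd_dvd_left d e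
        have := Nat.odd_iff.mp hdo
        omega
    obtain ⟨s, hs⟩ := exists_eq_pow_of_mul_eq_pow
      (Nat.isUnit_iff.mpr hcop) hmul
    have hso : Odd s := by
      rw [hs] at hdo
      rw [Nat.odd_iff, Nat.pow_mod] at hdo
      rcases Nat.even_or_odd s with h | h
      · have := Nat.even_iff.mp h; simp [this] at hdo
      · exact h
      done
    exact ⟨s, by nlinarith [hs, hd0], hso, hs⟩
end

section
/- If (a,b,c) is a primitive Pythagorean triple with a odd and c - b = d, then d = s^2 for some odd s dividing a, and the point (a,b) lies on the parabola y = -x^2/(2*a1^2) + a1^2/2 where a1 = a/s, i.e., b = -a^2/(2*a1^2) + a1^2/2. -/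
theorem stmt_19 (a b c d : ℕ) (ha : 0 < a) (hb : 0 < b) (hc : 0 < c)
    (hpyth : a ^ 2 + b ^ 2 = c ^ 2) (hbc : b < c)
    (hgcd : Nat.gcd a (Nat.gcd b c) = 1) (haodd : Odd a) (hd : d = c - b) :
    ∃ s a1 : ℕ, Odd s ∧ a = s * a1 ∧ d = s ^ 2 ∧
      2 * (a1 : ℤ) ^ 2 * (b : ℤ) = (a1 : ℤ) ^ 4 - (a : ℤ) ^ 2 := by
  obtain ⟨e, hce⟩ : ∃ e, c = b + e := ⟨c - b, by omega⟩
  have hde : d = e := by omega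
  have key : e * (e + 2 * b) = a ^ 2 := by subst hce; nlinarith [hpyth]
  -- gcd b c = 1
  have hgbc : Nat.gcd b c = 1 := by
    have h1 : Nat.Coprime a (Nat.gcd b c) := hgcd
    have h2 : Nat.gcd b c ∣ a ^ 2 := by
      have hb2 : Nat.gcd b c ^ 2 ∣ b ^ 2 := pow_dvd_pow_of_dvd (Nat.gcd_dvd_left b c) 2
      have hc2 : Nat.gcd b c ^ 2 ∣ c ^ 2 := pow_dvd_pow_of_dvd (Nat.gcd_dvd_right b c) 2
      have h3 : Nat.gcd b c ^ 2 ∣ a ^ 2 := by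
        have h4 : a ^ 2 = c ^ 2 - b ^ 2 := by omega
        rw [h4]; exact Nat.dvd_sub hc2 hb2
      exact dvd_trans (dvd_pow_self _ (by norm_num)) h3
    have : Nat.gcd b c ∣ 1 := (Nat.Coprime.pow_right 2 h1.symm).dvd_of_dvd_mul_right
      (by simpa [one_mul] using h2)
    exact Nat.dvd_one.mp this
  -- e is odd
  have haodd2 : Odd (a ^ 2) := haodd.pow
  have heodd : Odd e := (Nat.odd_mul.mp (key ▸ haodd2)).1
  -- coprimality of e and e + 2b
  have hcop : Nat.gcd e (e + 2 * b) = 1 := by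
    have hk1 : Nat.gcd e (e + 2 * b) ∣ e := Nat.gcd_dvd_left _ _
    have hk2 : Nat.gcd e (e + 2 * b) ∣ e + 2 * b := Nat.gcd_dvd_right _ _
    have hk3 : Nat.gcd e (e + 2 * b) ∣ 2 * b := by
      have := Nat.dvd_sub hk2 hk1; simpa using this
    have hkodd : Odd (Nat.gcd e (e + 2 * b)) := heodd.of_dvd_nat hk1
    have hkb : Nat.gcd e (e + 2 * b) ∣ b :=
      (Nat.Coprime.dvd_of_dvd_mul_left hkodd.coprime_two_right hk3)
    have hkc : Nat.gcd e (e + 2 * b) ∣ c := hce ▸ Nat.dvd_add hkb hk1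
    have : Nat.gcd e (e + 2 * b) ∣ Nat.gcd b c := Nat.dvd_gcd hkb hkc
    rw [hgbc] at this
    exact Nat.dvd_one.mp this
  obtain ⟨s, hs⟩ : ∃ s, e = s ^ 2 :=
    exists_eq_pow_of_mul_eq_pow (Nat.isUnit_iff.mpr hcop) key
  obtain ⟨t, ht⟩ : ∃ t, e + 2 * b = t ^ 2 :=
    exists_eq_pow_of_mul_eq_pow (Nat.isUnit_iff.mpr
      (by rwa [Nat.gcd_comm] at hcop)) (by rwa [mul_comm] at key)
  have hast : a = s * t := by
    have h1 : (s * t) ^ 2 = a ^ 2 := by rw [← key, ht, hs]; ring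
    exact (Nat.pow_left_injective (by norm_num) h1).symm
  have hsodd : Odd s := by
    rcases Nat.even_or_odd s with h | h
    · have h2 : Even (s ^ 2) := Nat.even_pow.mpr ⟨h, by norm_num⟩
      rw [← hs] at h2
      exact absurd heodd (Nat.not_odd_iff_even.mpr h2)
    · exact h
  refine ⟨s, t, hsodd, hast, hde.trans hs, ?_⟩
  have htZ : (s : ℤ) ^ 2 + 2 * (b : ℤ) = (t : ℤ) ^ 2 := by
    exact_mod_cast (hs ▸ ht : s ^ 2 + 2 * b = t ^ 2)
  rw [hast]
  push_cast
  linear_combination (t : ℤ) ^ 2 * htZ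
end
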